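/- There exists a surjective bounded linear operator Q : ℓ∞ → ℓ∞ whose kernel contains c₀; equivalently, the quotient Banach space ℓ∞/c₀ admits a quotient isomorphic to ℓ∞. -/

import Mathlib

open Filter Topology MeasureTheory
open scoped ENNReal

set_option synthInstance.maxHeartbeats 1000000
set_option maxHeartbeats 1000000

noncomputable section

/-- A Banach space `X` has weak*-sequentially compact dual ball if every sequence in the
closed unit ball of `X*` has a weak*-convergent subsequence. -/
def WStarSeqCompactDualBall (X : Type*) [SeminormedAddCommGroup X] [NormedSpace ℝ X] : Prop :=
  ∀ f : ℕ → (X →L[ℝ] ℝ), (∀ n, ‖f n‖ ≤ 1) →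
    ∃ φ : ℕ → ℕ, StrictMono φ ∧ ∃ g : X →L[ℝ] ℝ,
      ∀ x : X, Tendsto (fun k => f (φ k) x) atTop (nhds (g x))

/-- A Banach space `X` is a Grothendieck space if every weak*-convergent sequence in `X*`
is weakly convergent. -/
def GrothendieckSpace (X : Type*) [SeminormedAddCommGroup X] [NormedSpace ℝ X] : Prop :=
  ∀ (f : ℕ → (X →L[ℝ] ℝ)) (g : X →L[ℝ] ℝ),
    (∀ x : X, Tendsto (fun n => f n x) atTop (nhds (g x))) →
    ∀ F : (X →L[ℝ] ℝ) →L[ℝ] ℝ, Tendsto (fun n => F (f n)) atTop (nhds (F g))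

/-- An operator is weakly compact if the closure of the image of the closed unit ball is
compact in the weak topology of the codomain. -/
def IsWeaklyCompactOp {X Y : Type*} [SeminormedAddCommGroup X] [NormedSpace ℝ X]
    [SeminormedAddCommGroup Y] [NormedSpace ℝ Y] (T : X →L[ℝ] Y) : Prop :=
  IsCompact (closure (toWeakSpace ℝ Y '' (T '' Metric.closedBall (0:X) 1)))

/-- `ℓ¹`, the space of absolutely summable real sequences. -/
abbrev ellOne : Type := ↥(lp (fun _ : ℕ => ℝ) 1)

/-- Two normed spaces are isomorphic if there is a continuous linear bijection between them
with continuous inverse. -/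
def IsomorphicBanach (X Y : Type*) [SeminormedAddCommGroup X] [NormedSpace ℝ X]
    [SeminormedAddCommGroup Y] [NormedSpace ℝ Y] : Prop :=
  Nonempty (X ≃L[ℝ] Y)

/-- `ℓ∞`, the space of bounded real sequences with the sup norm. -/
abbrev ellInfty : Type := ↥(lp (fun _ : ℕ => ℝ) ∞)

/-- `c₀`, the subspace of `ℓ∞` of sequences converging to `0`. -/
def cZero : Submodule ℝ ellInfty where
  carrier := {x | Tendsto (fun i => (x : ℕ → ℝ) i) atTop (nhds 0)}
  zero_mem' := by
    simpa [lp.coeFn_zero] using (tendsto_const_nhds : Tendsto (fun _ : ℕ => (0:ℝ)) atTop (nhds 0))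
  add_mem' := by
    intro x y hx hy
    have := hx.add hy
    simpa [lp.coeFn_add] using this
  smul_mem' := by
    intro c x hx
    have := hx.const_mul c
    simpa [lp.coeFn_smul, smul_eq_mul] using this

/-- The `i`-th standard unit vector in `ℓ∞`. -/
def eVec (i : ℕ) : ellInfty := lp.single ∞ i 1

lemma eVec_mem_cZero (i : ℕ) : eVec i ∈ cZero := by
  have h : (fun n => (eVec i : ℕ → ℝ) n) =ᶠ[atTop] fun _ => (0:ℝ) := by
    filter_upwards [eventually_gt_atTop i] with n hn
    simp [eVec, lp.single_apply, hn.ne']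
  exact Tendsto.congr' h.symm tendsto_const_nhds

/-- The `i`-th standard unit vector, as an element of a subspace `S` of `ℓ∞` containing `c₀`. -/
def eIn (S : Submodule ℝ ellInfty) (hS : cZero ≤ S) (i : ℕ) : ↥S :=
  ⟨eVec i, hS (eVec_mem_cZero i)⟩

/-- A sequence `(fₙ)` in `S*` is `σ(S*,ℓ∞)`-convergent to `g` if, testing against the unit
vectors `eᵢ`, it converges against every bounded real sequence `z`. -/
def SigmaLinfConv (S : Submodule ℝ ellInfty) (hS : cZero ≤ S)
    (f : ℕ → (↥S →L[ℝ] ℝ)) (g : ↥S →L[ℝ] ℝ) : Prop :=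
  ∀ z : ℕ → ℝ, (∃ C : ℝ, ∀ i, |z i| ≤ C) →
    Tendsto (fun n => ∑' i, z i * f n (eIn S hS i)) atTop
      (nhds (∑' i, z i * g (eIn S hS i)))

/-- `S` is an `ℓ∞`-Grothendieck subspace if it contains `c₀` and every weak*-convergent
sequence in `S*` is `σ(S*,ℓ∞)`-convergent. -/
def IsLinfGrothendieck (S : Submodule ℝ ellInfty) : Prop :=
  ∃ hS : cZero ≤ S, ∀ (f : ℕ → (↥S →L[ℝ] ℝ)) (g : ↥S →L[ℝ] ℝ),
    (∀ x : ↥S, Tendsto (fun n => f n x) atTop (nhds (g x))) →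
    SigmaLinfConv S hS f g


noncomputable def myU : Ultrafilter ℕ := Filter.hyperfilter ℕ

lemma exists_tendsto_myU (x : ℕ → ℝ) (C : ℝ) (h : ∀ n, |x n| ≤ C) :
    ∃ c, Tendsto x (myU : Filter ℕ) (nhds c) := by
  have hcpt : IsCompact (Set.Icc (-C) C) := isCompact_Icc
  have hle : ↑(myU.map x) ≤ Filter.principal (Set.Icc (-C) C) := by
    refine Filter.le_principal_iff.mpr ?_
    refine Filter.mem_map.mpr ?_
    filter_upwards with n
    exact abs_le.mp (h n)
  obtain ⟨c, _, hc⟩ := hcpt.ultrafilter_le_nhds (myU.map x) hle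
  exact ⟨c, hc⟩

lemma abs_apply_le_norm (x : ellInfty) (n : ℕ) : |(x : ℕ → ℝ) n| ≤ ‖x‖ := by
  simpa [Real.norm_eq_abs] using lp.norm_apply_le_norm ENNReal.top_ne_zero x n

/-- The candidate quotient map, as a bare function. -/
noncomputable def Qfun (x : ellInfty) : ℕ → ℝ :=
  fun k => limUnder (myU : Filter ℕ) (fun n => (x : ℕ → ℝ) (Nat.pair k n))

lemma Qfun_tendsto (x : ellInfty) (k : ℕ) :
    Tendsto (fun n => (x : ℕ → ℝ) (Nat.pair k n)) (myU : Filter ℕ) (nhds (Qfun x k)) := by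
  obtain ⟨c, hc⟩ := exists_tendsto_myU (fun n => (x : ℕ → ℝ) (Nat.pair k n)) ‖x‖
    (fun n => abs_apply_le_norm x _)
  unfold Qfun
  rwa [hc.limUnder_eq]

lemma Qfun_abs_le (x : ellInfty) (k : ℕ) : |Qfun x k| ≤ ‖x‖ := by
  have h1 : Tendsto (fun n => |(x : ℕ → ℝ) (Nat.pair k n)|) (myU : Filter ℕ)
      (nhds |Qfun x k|) := (Qfun_tendsto x k).abs
  exact le_of_tendsto h1 (Filter.Eventually.of_forall fun n => abs_apply_le_norm x _)

lemma Qfun_memℓp (x : ellInfty) : Memℓp (Qfun x) ∞ := by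
  apply memℓp_infty
  refine ⟨‖x‖, ?_⟩
  rintro _ ⟨k, rfl⟩
  simpa [Real.norm_eq_abs] using Qfun_abs_le x k

/-- The candidate quotient map, as a linear map. -/
noncomputable def Qlin : ellInfty →ₗ[ℝ] ellInfty where
  toFun x := ⟨Qfun x, Qfun_memℓp x⟩
  map_add' x y := by
    apply lp.ext
    funext k
    have hx := Qfun_tendsto x k
    have hy := Qfun_tendsto y k
    have hxy : Tendsto (fun n => ((x + y : ellInfty) : ℕ → ℝ) (Nat.pair k n))
        (myU : Filter ℕ) (nhds (Qfun x k + Qfun y k)) := by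
      refine Tendsto.congr (fun n => ?_) (hx.add hy)
      simp [lp.coeFn_add]
    have : Qfun (x + y) k = Qfun x k + Qfun y k := hxy.limUnder_eq
    exact this
  map_smul' c x := by
    apply lp.ext
    funext k
    have hx := Qfun_tendsto x k
    have hcx : Tendsto (fun n => ((c • x : ellInfty) : ℕ → ℝ) (Nat.pair k n))
        (myU : Filter ℕ) (nhds (c * Qfun x k)) := by
      refine Tendsto.congr (fun n => ?_) (hx.const_mul c)
      simp [lp.coeFn_smul]
    have : Qfun (c • x) k = c * Qfun x k := hcx.limUnder_eq
    simpa [lp.coeFn_smul] using this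

/-- there is a surjective bounded operator `Q : ℓ∞ → ℓ∞` whose kernel
contains `c₀`. -/
theorem exists_surjective_operator_kernel_contains_cZero :
    ∃ Q : ellInfty →L[ℝ] ellInfty, Function.Surjective Q ∧ cZero ≤ LinearMap.ker (Q : ellInfty →ₗ[ℝ] ellInfty) := by
  classical
  have hbound : ∀ x : ellInfty, ‖Qlin x‖ ≤ 1 * ‖x‖ := by
    intro x
    rw [one_mul]
    apply lp.norm_le_of_forall_le (norm_nonneg x)
    intro k
    simpa [Qlin, Real.norm_eq_abs] using Qfun_abs_le x k
  refine ⟨Qlin.mkContinuous 1 hbound, ?_, ?_⟩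
  · intro y
    have hmem : Memℓp (fun m => (y : ℕ → ℝ) (Nat.unpair m).1) ∞ := by
      apply memℓp_infty
      refine ⟨‖y‖, ?_⟩
      rintro _ ⟨m, rfl⟩
      simpa [Real.norm_eq_abs] using abs_apply_le_norm y (Nat.unpair m).1
    refine ⟨⟨fun m => (y : ℕ → ℝ) (Nat.unpair m).1, hmem⟩, ?_⟩
    apply lp.ext
    funext k
    show Qfun _ k = (y : ℕ → ℝ) k
    have hconst : Tendsto
        (fun n => ((⟨fun m => (y : ℕ → ℝ) (Nat.unpair m).1, hmem⟩ : ellInfty) : ℕ → ℝ)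
          (Nat.pair k n)) (myU : Filter ℕ) (nhds ((y : ℕ → ℝ) k)) := by
      refine Tendsto.congr (fun n => ?_) tendsto_const_nhds
      simp [Nat.unpair_pair]
    exact hconst.limUnder_eq
  · intro x hx
    have hx' : Tendsto (fun i => (x : ℕ → ℝ) i) atTop (nhds 0) := hx
    rw [LinearMap.mem_ker]
    show Qlin.mkContinuous 1 hbound x = 0
    have : Qlin x = 0 := by
      apply lp.ext
      funext k
      have hpair : Tendsto (fun n => Nat.pair k n) atTop atTop :=
        tendsto_atTop_mono (fun n => Nat.right_le_pair k n) tendsto_id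
      have h0 : Tendsto (fun n => (x : ℕ → ℝ) (Nat.pair k n)) (myU : Filter ℕ) (nhds 0) :=
        (hx'.comp hpair).mono_left Nat.hyperfilter_le_atTop
      show Qfun x k = (0 : ellInfty) k
      unfold Qfun
      rw [h0.limUnder_eq]
      simp
    simpa using this
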